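/- Let F : C₁ → C₂ be a functor, let (L₁, l₁) be a localization on C₁ and (L₂, l₂) a localization on C₂. Then the functors L₂ ∘ F and F ∘ L₁ are naturally isomorphic if and only if F preserves local objects and preserves equivalences. In this case, the unique natural transformation α : F ∘ L₁ → L₂ ∘ F with α ∘ F l₁ = l₂ F and the unique natural transformation β : L₂ ∘ F → F ∘ L₁ with β ∘ l₂ F = F l₁ are mutually inverse natural isomorphisms. -/
import Mathlib


open CategoryTheory

/-- A localization (reflection) on a category `C`: a functor `L : C ⥤ C` with a natural
transformation `l : 𝟭 C ⟶ L` such that `L (l X) = l (L X)` and these morphisms are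
isomorphisms. -/
structure LocalizationData (C : Type*) [Category C] where
  /-- the localization functor -/
  L : C ⥤ C
  /-- the unit -/
  l : 𝟭 C ⟶ L
  coincide : ∀ X : C, L.map (l.app X) = l.app (L.obj X)
  isIso : ∀ X : C, IsIso (L.map (l.app X))

/-- An object `X` is `L`-local if `l X : X ⟶ L X` is an isomorphism. -/
def LocalizationData.IsLocal {C : Type*} [Category C] (Λ : LocalizationData C) (X : C) : Prop :=
  IsIso (Λ.l.app X)

/-- A morphism `g` is an `L`-equivalence if `L g` is an isomorphism. -/
def LocalizationData.IsEquiv {C : Type*} [Category C] (Λ : LocalizationData C)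
    {X Y : C} (g : X ⟶ Y) : Prop :=
  IsIso (Λ.L.map g)

namespace LocalizationData

variable {C : Type*} [Category C] (Λ : LocalizationData C)

lemma isLocal_L (X : C) : Λ.IsLocal (Λ.L.obj X) := by
  unfold IsLocal
  rw [← Λ.coincide]
  exact Λ.isIso X

lemma isEquiv_l (X : C) : Λ.IsEquiv (Λ.l.app X) := Λ.isIso X

lemma nat (Λ : LocalizationData C) {X Y : C} (f : X ⟶ Y) :
    f ≫ Λ.l.app Y = Λ.l.app X ≫ Λ.L.map f := by
  simpa using Λ.l.naturality f

lemma isLocal_of_iso {X Y : C} (e : X ≅ Y) (h : Λ.IsLocal Y) : Λ.IsLocal X := by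
  unfold IsLocal at *
  haveI : IsIso (Λ.l.app Y) := h
  have heq : Λ.l.app X = (e.hom ≫ Λ.l.app Y) ≫ inv (Λ.L.map e.hom) := by
    rw [Λ.nat e.hom, Category.assoc, IsIso.hom_inv_id, Category.comp_id]
  rw [heq]
  infer_instance

/-- Cancellation: an `L`-equivalence is epi with respect to maps into local objects. -/
lemma cancel {A B Z : C} {g : A ⟶ B} (hg : Λ.IsEquiv g) (hZ : Λ.IsLocal Z)
    {h h' : B ⟶ Z} (H : g ≫ h = g ≫ h') : h = h' := by
  have hgi : IsIso (Λ.L.map g) := hg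
  have hZi : IsIso (Λ.l.app Z) := hZ
  have hL : Λ.L.map h = Λ.L.map h' := by
    have := congrArg Λ.L.map H
    simp only [Functor.map_comp] at this
    exact (cancel_epi (Λ.L.map g)).1 this
  have e1 : h = (Λ.l.app B ≫ Λ.L.map h) ≫ inv (Λ.l.app Z) := by
    rw [← Λ.nat h, Category.assoc, IsIso.hom_inv_id, Category.comp_id]
  have e2 : h' = (Λ.l.app B ≫ Λ.L.map h') ≫ inv (Λ.l.app Z) := by
    rw [← Λ.nat h', Category.assoc, IsIso.hom_inv_id, Category.comp_id]
  rw [e1, e2, hL]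

end LocalizationData

/-- `L₂ ∘ F` and `F ∘ L₁` are naturally isomorphic iff `F` preserves local
objects and equivalences; in that case the canonical `α` and `β` are mutually inverse. -/
theorem comparison_iso_iff_preserves_local_and_equiv
    {C₁ C₂ : Type*} [Category C₁] [Category C₂] (F : C₁ ⥤ C₂)
    (Λ₁ : LocalizationData C₁) (Λ₂ : LocalizationData C₂) :
    (Nonempty (F ⋙ Λ₂.L ≅ Λ₁.L ⋙ F) ↔
      ((∀ X : C₁, Λ₁.IsLocal X → Λ₂.IsLocal (F.obj X)) ∧
        (∀ ⦃X Y : C₁⦄ (f : X ⟶ Y), Λ₁.IsEquiv f → Λ₂.IsEquiv (F.map f)))) ∧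
    ((∀ X : C₁, Λ₁.IsLocal X → Λ₂.IsLocal (F.obj X)) →
      (∀ ⦃X Y : C₁⦄ (f : X ⟶ Y), Λ₁.IsEquiv f → Λ₂.IsEquiv (F.map f)) →
      ∀ (α : Λ₁.L ⋙ F ⟶ F ⋙ Λ₂.L) (β : F ⋙ Λ₂.L ⟶ Λ₁.L ⋙ F),
        (∀ X : C₁, F.map (Λ₁.l.app X) ≫ α.app X = Λ₂.l.app (F.obj X)) →
        (∀ X : C₁, Λ₂.l.app (F.obj X) ≫ β.app X = F.map (Λ₁.l.app X)) →
        α ≫ β = 𝟙 (Λ₁.L ⋙ F) ∧ β ≫ α = 𝟙 (F ⋙ Λ₂.L)) := by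
  constructor
  · constructor
    · rintro ⟨e⟩
      constructor
      · intro X hX
        -- F X ≅ F (L₁ X) ≅ L₂ (F X), and L₂ (F X) is local
        have hX' : IsIso (Λ₁.l.app X) := hX
        have e1 : F.obj X ≅ F.obj (Λ₁.L.obj X) := F.mapIso (asIso (Λ₁.l.app X))
        exact Λ₂.isLocal_of_iso (e1 ≪≫ (e.app X).symm) (Λ₂.isLocal_L (F.obj X))
      · intro X Y f hf
        have hf' : IsIso (Λ₁.L.map f) := hf
        have hnat := e.hom.naturality f
        -- (F ⋙ L₂).map f ≫ e.hom.app Y = e.hom.app X ≫ (L₁ ⋙ F).map f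
        have : Λ₂.L.map (F.map f) =
            e.hom.app X ≫ F.map (Λ₁.L.map f) ≫ e.inv.app Y := by
          simp only [Functor.comp_map] at hnat
          rw [← Category.assoc, ← hnat, Category.assoc, Iso.hom_inv_id_app,
            Category.comp_id]
        unfold LocalizationData.IsEquiv
        rw [this]
        infer_instance
    · rintro ⟨hloc, heq⟩
      -- construct β as the natural iso
      have hFLloc : ∀ X : C₁, IsIso (Λ₂.l.app (F.obj (Λ₁.L.obj X))) := fun X =>
        hloc _ (Λ₁.isLocal_L X)
      have hFleq : ∀ X : C₁, IsIso (Λ₂.L.map (F.map (Λ₁.l.app X))) := fun X =>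
        heq _ (Λ₁.isEquiv_l X)
      refine ⟨NatIso.ofComponents
        (fun X => (have := hFLloc X; have := hFleq X;
          asIso (Λ₂.L.map (F.map (Λ₁.l.app X))) ≪≫ (asIso (Λ₂.l.app (F.obj (Λ₁.L.obj X)))).symm))
        (fun {X Y} f => ?_)⟩
      have := hFLloc X; have := hFLloc Y
      have this1 : Λ₂.L.map (F.map f) ≫ Λ₂.L.map (F.map (Λ₁.l.app Y)) =
          Λ₂.L.map (F.map (Λ₁.l.app X)) ≫ Λ₂.L.map (F.map (Λ₁.L.map f)) := by
        simp only [Functor.comp_map, ← Functor.map_comp]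
        congr 2
        simpa using Λ₁.l.naturality f
      have hnat2 : Λ₂.l.app (F.obj (Λ₁.L.obj X)) ≫ Λ₂.L.map (F.map (Λ₁.L.map f)) =
          F.map (Λ₁.L.map f) ≫ Λ₂.l.app (F.obj (Λ₁.L.obj Y)) := by
        simpa using (Λ₂.l.naturality (F.map (Λ₁.L.map f))).symm
      have key : Λ₂.L.map (F.map (Λ₁.L.map f)) ≫ inv (Λ₂.l.app (F.obj (Λ₁.L.obj Y))) =
          inv (Λ₂.l.app (F.obj (Λ₁.L.obj X))) ≫ F.map (Λ₁.L.map f) := by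
        rw [IsIso.comp_inv_eq, Category.assoc, ← hnat2, IsIso.inv_hom_id_assoc]
      simp only [Iso.trans_hom, Iso.symm_hom, asIso_hom, asIso_inv, Functor.comp_map]
      rw [← Category.assoc, this1, Category.assoc, key, Category.assoc]
  · intro hloc heq α β hα hβ
    have hFLloc : ∀ X : C₁, IsIso (Λ₂.l.app (F.obj (Λ₁.L.obj X))) := fun X =>
      hloc _ (Λ₁.isLocal_L X)
    constructor
    · ext X
      have := hFLloc X
      refine Λ₂.cancel (heq _ (Λ₁.isEquiv_l X)) (hloc _ (Λ₁.isLocal_L X)) ?_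
      rw [NatTrans.comp_app, NatTrans.id_app, ← Category.assoc, hα X]
      exact (hβ X).trans (Category.comp_id _).symm
    · ext X
      refine Λ₂.cancel (Λ₂.isEquiv_l (F.obj X)) (Λ₂.isLocal_L (F.obj X)) ?_
      rw [NatTrans.comp_app, NatTrans.id_app, ← Category.assoc, hβ X]
      exact (hα X).trans (Category.comp_id _).symm
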